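/- (Bridge between the divergence-based and entropy-based irreality, Eq. establishing D(ρ‖Φ_A(ρ)) = 𝕴_A(ρ).) Let ρ be a positive definite density matrix on (Fin dA × Fin dB). Then D(ρ‖Φ_A(ρ)) = S(Φ_A(ρ)) − S(ρ), where D(τ‖ω) = (trace(τ * (hτ.cfc Real.log)) − trace(τ * (hω.cfc Real.log))).re is the von Neumann relative entropy defined via the Hermitian functional calculus, and S is the von Neumann entropy. -/

import Mathlib

open Matrix Kronecker BigOperators
open scoped ComplexOrder

/-- The unrevealed-measurement (pinching) map on the bipartite system:
`Φ_A(ρ) = ∑ i, (A i ⊗ₖ 1) * ρ * (A i ⊗ₖ 1)`. -/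
noncomputable def pinch {dA dB : ℕ} {ι : Type*} [Fintype ι]
    (A : ι → Matrix (Fin dA) (Fin dA) ℂ)
    (ρ : Matrix (Fin dA × Fin dB) (Fin dA × Fin dB) ℂ) :
    Matrix (Fin dA × Fin dB) (Fin dA × Fin dB) ℂ :=
  ∑ i, ((A i) ⊗ₖ (1 : Matrix (Fin dB) (Fin dB) ℂ)) * ρ *
    ((A i) ⊗ₖ (1 : Matrix (Fin dB) (Fin dB) ℂ))

/-- The von Neumann relative entropy `D(τ‖ω)`, via the Hermitian functional calculus. -/
noncomputable def relEnt {m : Type*} [Fintype m] [DecidableEq m]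
    {τ ω : Matrix m m ℂ} (hτ : τ.IsHermitian) (hω : ω.IsHermitian) : ℝ :=
  ((τ * hτ.cfc Real.log).trace - (τ * hω.cfc Real.log).trace).re

/-- The von Neumann entropy of a Hermitian matrix, via its eigenvalues. -/
noncomputable def vnEntropy {m : Type*} [Fintype m] [DecidableEq m]
    {ρ : Matrix m m ℂ} (hρ : ρ.IsHermitian) : ℝ :=
  ∑ k, Real.negMulLog (hρ.eigenvalues k)

section Aux

variable {m : Type*} [Fintype m] [DecidableEq m]

/-- Conjugation by a unitary matrix, as an `ℝ`-algebra homomorphism. -/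
noncomputable def unitaryConjAlgHom (U : Matrix.unitaryGroup m ℂ) :
    Matrix m m ℂ →ₐ[ℝ] Matrix m m ℂ where
  toFun X := (U : Matrix m m ℂ) * X * (star U : Matrix m m ℂ)
  map_one' := by
    show (U : Matrix m m ℂ) * 1 * star (U : Matrix m m ℂ) = 1
    rw [mul_one]
    exact Unitary.mul_star_self_of_mem U.prop
  map_mul' X Y := by
    have h1 : (star U : Matrix m m ℂ) * U = 1 := Unitary.coe_star_mul_self U
    calc (U : Matrix m m ℂ) * (X * Y) * (star U : Matrix m m ℂ)
        = (U : Matrix m m ℂ) * X * ((star U : Matrix m m ℂ) * U) * Y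
          * (star U : Matrix m m ℂ) := by rw [h1]; noncomm_ring
      _ = ((U : Matrix m m ℂ) * X * (star U : Matrix m m ℂ))
          * ((U : Matrix m m ℂ) * Y * (star U : Matrix m m ℂ)) := by noncomm_ring
  map_zero' := by simp
  map_add' X Y := by noncomm_ring
  commutes' r := by
    show (U : Matrix m m ℂ) * algebraMap ℝ (Matrix m m ℂ) r * star (U : Matrix m m ℂ)
        = algebraMap ℝ (Matrix m m ℂ) r
    rw [← Algebra.commutes r (U : Matrix m m ℂ), mul_assoc,
      Unitary.mul_star_self_of_mem U.prop, mul_one]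

lemma aeval_isHermitian {ω : Matrix m m ℂ} (hω : ω.IsHermitian) (q : Polynomial ℝ) :
    Polynomial.aeval ω q = hω.cfc (fun x => q.eval x) := by
  have key : ω = unitaryConjAlgHom hω.eigenvectorUnitary
      (Matrix.diagonalAlgHom ℝ ((RCLike.ofReal ∘ hω.eigenvalues : m → ℂ))) := by
    have h := hω.spectral_theorem
    rw [Unitary.conjStarAlgAut_apply] at h
    exact h
  conv_lhs => rw [key]
  rw [Polynomial.aeval_algHom_apply, Polynomial.aeval_algHom_apply]
  have harg : (Polynomial.aeval ((RCLike.ofReal ∘ hω.eigenvalues : m → ℂ)) q)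
      = (RCLike.ofReal ∘ (fun x => q.eval x) ∘ hω.eigenvalues : m → ℂ) := by
    funext k
    have hk : (Polynomial.aeval (RCLike.ofReal ∘ hω.eigenvalues : m → ℂ) q) k
        = Polynomial.aeval ((RCLike.ofReal ∘ hω.eigenvalues : m → ℂ) k) q :=
      (Polynomial.aeval_algHom_apply (Pi.evalAlgHom ℝ (fun _ => ℂ) k) _ q).symm
    rw [hk]
    simp only [Function.comp_apply]
    rw [show (RCLike.ofReal (hω.eigenvalues k) : ℂ) = algebraMap ℝ ℂ (hω.eigenvalues k) by
      simp [RCLike.algebraMap_eq_ofReal],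
      Polynomial.aeval_algebraMap_apply]
    simp [RCLike.algebraMap_eq_ofReal, Polynomial.coe_aeval_eq_eval]
  unfold Matrix.IsHermitian.cfc unitaryConjAlgHom
  simp only [Matrix.diagonalAlgHom, AlgHom.coe_mk, RingHom.coe_mk, MonoidHom.coe_mk,
    OneHom.coe_mk, harg]
  rw [Unitary.conjStarAlgAut_apply]; rfl

lemma commute_aeval {B ω : Matrix m m ℂ} (h : Commute B ω) (q : Polynomial ℝ) :
    Commute B (Polynomial.aeval ω q) := by
  induction q using Polynomial.induction_on' with
  | add p r hp hr => rw [map_add]; exact hp.add_right hr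
  | monomial n c =>
    rw [Polynomial.aeval_monomial]
    exact ((Algebra.commute_algebraMap_left c B).symm).mul_right (h.pow_right n)

/-- Anything commuting with a Hermitian matrix commutes with its functional calculus. -/
lemma commute_cfc' {B ω : Matrix m m ℂ} (hω : ω.IsHermitian) (h : Commute B ω) (f : ℝ → ℝ) :
    Commute B (hω.cfc f) := by
  classical
  set s : Finset ℝ := Finset.image hω.eigenvalues Finset.univ with hs
  set q : Polynomial ℝ := Lagrange.interpolate s id f with hq
  have heval : ∀ k, q.eval (hω.eigenvalues k) = f (hω.eigenvalues k) := by
    intro k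
    have hk : hω.eigenvalues k ∈ s := Finset.mem_image_of_mem _ (Finset.mem_univ k)
    simpa [hq] using Lagrange.eval_interpolate_at_node (v := id) (r := f) (Set.injOn_id _) hk
  have hfun : (RCLike.ofReal ∘ f ∘ hω.eigenvalues : m → ℂ)
      = RCLike.ofReal ∘ (fun x => q.eval x) ∘ hω.eigenvalues := by
    funext k; simp [heval k]
  have : hω.cfc f = hω.cfc (fun x => q.eval x) := by
    unfold Matrix.IsHermitian.cfc
    rw [hfun]
  rw [this, ← aeval_isHermitian hω q]
  exact commute_aeval h q

/-- Trace of `ω * f(ω)` in terms of eigenvalues. -/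
lemma trace_mul_cfc {ω : Matrix m m ℂ} (hω : ω.IsHermitian) (f : ℝ → ℝ) :
    (ω * hω.cfc f).trace
      = ∑ k, ((hω.eigenvalues k : ℂ) * (f (hω.eigenvalues k) : ℂ)) := by
  set U : Matrix m m ℂ := (hω.eigenvectorUnitary : Matrix m m ℂ) with hU
  have h1 : star U * U = 1 := Unitary.coe_star_mul_self _
  have key0 : ω * hω.cfc f
      = (U * Matrix.diagonal (RCLike.ofReal ∘ hω.eigenvalues) * star U)
        * (U * Matrix.diagonal (RCLike.ofReal ∘ f ∘ hω.eigenvalues) * star U) := by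
    have h := hω.spectral_theorem
    rw [Unitary.conjStarAlgAut_apply] at h
    rw [hU, ← h]; rfl
  have key : ω * hω.cfc f
      = U * (Matrix.diagonal (RCLike.ofReal ∘ hω.eigenvalues)
        * Matrix.diagonal (RCLike.ofReal ∘ f ∘ hω.eigenvalues)) * star U := by
    rw [key0]
    calc (U * Matrix.diagonal (RCLike.ofReal ∘ hω.eigenvalues) * star U)
          * (U * Matrix.diagonal (RCLike.ofReal ∘ f ∘ hω.eigenvalues) * star U)
        = U * Matrix.diagonal (RCLike.ofReal ∘ hω.eigenvalues) * (star U * U)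
          * Matrix.diagonal (RCLike.ofReal ∘ f ∘ hω.eigenvalues) * star U := by noncomm_ring
      _ = _ := by rw [h1]; noncomm_ring
  rw [key, Matrix.trace_mul_cycle, ← mul_assoc, h1, one_mul,
    Matrix.diagonal_mul_diagonal, Matrix.trace_diagonal]
  simp [RCLike.ofReal_alg]

/-- The real trace of `ω * log ω` is minus the von Neumann entropy. -/
lemma re_trace_mul_cfc_log {ω : Matrix m m ℂ} (hω : ω.IsHermitian) :
    ((ω * hω.cfc Real.log).trace).re = - vnEntropy hω := by
  rw [trace_mul_cfc hω Real.log, Complex.re_sum, vnEntropy, ← Finset.sum_neg_distrib]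
  refine Finset.sum_congr rfl fun k _ => ?_
  rw [← Complex.ofReal_mul, Complex.ofReal_re, Real.negMulLog]
  ring

end Aux

/-- Bridge between the divergence-based and entropy-based irreality:
`D(ρ‖Φ_A(ρ)) = S(Φ_A(ρ)) − S(ρ)`. -/
theorem relEnt_pinch_eq_irreality {dA dB : ℕ} {ι : Type*} [Fintype ι] [DecidableEq ι]
    (A : ι → Matrix (Fin dA) (Fin dA) ℂ)
    (hproj : ∀ i j, A i * A j = if i = j then A i else 0)
    (hherm : ∀ i, (A i)ᴴ = A i)
    (hsum : ∑ i, A i = 1)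
    (ρ : Matrix (Fin dA × Fin dB) (Fin dA × Fin dB) ℂ)
    (hρ : ρ.PosDef) (htr : ρ.trace = 1)
    (hΦ : (pinch A ρ).IsHermitian) :
    relEnt hρ.isHermitian hΦ = vnEntropy hΦ - vnEntropy hρ.isHermitian := by
  classical
  set P : ι → Matrix (Fin dA × Fin dB) (Fin dA × Fin dB) ℂ :=
    fun i => (A i) ⊗ₖ (1 : Matrix (Fin dB) (Fin dB) ℂ) with hP
  have hPmul : ∀ i j, P i * P j = if i = j then P i else 0 := by
    intro i j
    simp only [hP]
    rw [← Matrix.mul_kronecker_mul, one_mul, hproj i j]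
    split <;> simp
  have hPsum : ∑ i, P i = 1 := by
    simp only [hP]
    ext ⟨a, b⟩ ⟨c, d⟩
    simp only [Matrix.sum_apply, Matrix.kroneckerMap_apply, Matrix.one_apply,
      ← Finset.sum_mul]
    rw [show (∑ i, A i a c) = (1 : Matrix (Fin dA) (Fin dA) ℂ) a c by
      rw [← hsum]; simp [Matrix.sum_apply]]
    by_cases hac : a = c <;> by_cases hbd : b = d <;>
      simp [Matrix.one_apply, hac, hbd, Prod.ext_iff]
  have hpinch : pinch A ρ = ∑ i, P i * ρ * P i := rfl
  have hcomm : ∀ j, Commute (P j) (pinch A ρ) := by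
    intro j
    have hl : P j * pinch A ρ = P j * ρ * P j := by
      rw [hpinch, Finset.mul_sum]
      rw [Finset.sum_eq_single j]
      · rw [← mul_assoc, ← mul_assoc, hPmul j j]; simp
      · intro i _ hij
        rw [← mul_assoc, ← mul_assoc, hPmul j i, if_neg (Ne.symm hij)]
        simp
      · simp
    have hr : pinch A ρ * P j = P j * ρ * P j := by
      rw [hpinch, Finset.sum_mul]
      rw [Finset.sum_eq_single j]
      · rw [mul_assoc, hPmul j j]; simp
      · intro i _ hij
        rw [mul_assoc, hPmul i j, if_neg hij]; simp
      · simp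
    rw [Commute, SemiconjBy, hl, hr]
  set L : Matrix (Fin dA × Fin dB) (Fin dA × Fin dB) ℂ := hΦ.cfc Real.log with hL
  have hLcomm : ∀ j, P j * L = L * P j := fun j => commute_cfc' hΦ (hcomm j) Real.log
  have htrace_eq : (ρ * L).trace = (pinch A ρ * L).trace := by
    rw [hpinch, Finset.sum_mul, Matrix.trace_sum]
    have : ∀ i, (P i * ρ * P i * L).trace = (P i * ρ * L).trace := by
      intro i
      calc (P i * ρ * P i * L).trace
          = (P i * ρ * (L * P i)).trace := by rw [mul_assoc (P i * ρ), hLcomm i]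
        _ = ((P i * ρ * L) * P i).trace := by rw [← mul_assoc]
        _ = (P i * (P i * ρ * L)).trace := by rw [Matrix.trace_mul_comm]
        _ = ((P i * P i) * ρ * L).trace := by
              rw [show P i * (P i * ρ * L) = (P i * P i) * ρ * L by noncomm_ring]
        _ = (P i * ρ * L).trace := by rw [hPmul i i, if_pos rfl]
    rw [Finset.sum_congr rfl fun i _ => this i, ← Matrix.trace_sum, ← Finset.sum_mul,
      ← Finset.sum_mul, hPsum, one_mul]
  rw [relEnt, Complex.sub_re, htrace_eq, re_trace_mul_cfc_log hρ.isHermitian,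
    re_trace_mul_cfc_log hΦ]
  ring
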